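/- Let p be a prime and G a finite group. Let P be a normal p-subgroup of G with C_G(P) ≤ P, and let H be a subgroup of G such that the iterated commutator subgroup ⁅⁅P, H⁆, H⁆ is trivial. Then H is a p-group. -/

import Mathlib

/-- If `G` is a finite group with a normal `p`-subgroup `P` satisfying
`C_G(P) ≤ P`, and `H` is a subgroup with `⁅⁅P, H⁆, H⁆ = ⊥`, then `H` is a
`p`-group. -/
theorem stmt_3 {p : ℕ} (hp : p.Prime) {G : Type*} [Group G] [Finite G]
    (P H : Subgroup G) (hPn : P.Normal) (hP : IsPGroup p P)
    (hC : Subgroup.centralizer (P : Set G) ≤ P)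
    (hcomm : ⁅⁅P, H⁆, H⁆ = ⊥) :
    IsPGroup p H := by
  have hPHle : ⁅P, H⁆ ≤ P := Subgroup.commutator_le_left P H
  have hcen : ⁅P, H⁆ ≤ Subgroup.centralizer (H : Set G) :=
    Subgroup.commutator_eq_bot_iff_le_centralizer.mp hcomm
  -- Key: any h ∈ H of order coprime to p is trivial.
  have key : ∀ h ∈ H, ¬ p ∣ orderOf h → h = 1 := by
    intro h hh hnd
    have hcent : ∀ x ∈ P, x * h = h * x := by
      intro x hx
      open scoped commutatorElement in
      set c : G := ⁅x⁻¹, h⁆ with hc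
      have hcPH : c ∈ ⁅P, H⁆ := Subgroup.commutator_mem_commutator (P.inv_mem hx) hh
      have hcP : c ∈ P := hPHle hcPH
      have hch : Commute h c := ((Subgroup.mem_centralizer_iff.mp (hcen hcPH)) h hh)
      have hstep : h * x = x * c * h := by
        simp only [hc, commutatorElement_def]; group
      have hpow : ∀ n : ℕ, h ^ n * x = x * c ^ n * h ^ n := by
        intro n
        induction n with
        | zero => simp
        | succ n ih =>
          calc h ^ (n+1) * x = h * (h ^ n * x) := by rw [pow_succ']; group
            _ = h * (x * c ^ n * h ^ n) := by rw [ih]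
            _ = (h * x) * c ^ n * h ^ n := by group
            _ = (x * c * h) * c ^ n * h ^ n := by rw [hstep]
            _ = x * c * (h * c ^ n) * h ^ n := by group
            _ = x * c * (c ^ n * h) * h ^ n := by rw [(hch.pow_right n).eq]
            _ = x * c ^ (n+1) * h ^ (n+1) := by rw [pow_succ', pow_succ]; group
      have hcm : c ^ orderOf h = 1 := by
        have := hpow (orderOf h)
        rw [pow_orderOf_eq_one, one_mul, mul_one] at this
        have := this.symm
        exact mul_left_cancel (a := x) (by simpa using this)
      -- c has p-power order and order dividing orderOf h which is coprime to p
      obtain ⟨k, hk⟩ := hP ⟨c, hcP⟩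
      have hkG : c ^ p ^ k = 1 := by
        have := congrArg (Subtype.val) hk
        simpa using this
      have h1 : orderOf c ∣ p ^ k := orderOf_dvd_of_pow_eq_one hkG
      have h2 : orderOf c ∣ orderOf h := orderOf_dvd_of_pow_eq_one hcm
      have hcop : Nat.Coprime (p ^ k) (orderOf h) :=
        Nat.Coprime.pow_left k (hp.coprime_iff_not_dvd.mpr hnd)
      have : orderOf c = 1 := Nat.eq_one_of_dvd_coprimes hcop h1 h2
      have hc1 : c = 1 := orderOf_eq_one_iff.mp this
      rw [hstep, hc1, mul_one]
    have hmem : h ∈ Subgroup.centralizer (P : Set G) :=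
      Subgroup.mem_centralizer_iff.mpr hcent
    have hhP : h ∈ P := hC hmem
    obtain ⟨k, hk⟩ := hP ⟨h, hhP⟩
    have hkG : h ^ p ^ k = 1 := by
      have := congrArg (Subtype.val) hk
      simpa using this
    have h1 : orderOf h ∣ p ^ k := orderOf_dvd_of_pow_eq_one hkG
    have hcop : Nat.Coprime (p ^ k) (orderOf h) :=
      Nat.Coprime.pow_left k (hp.coprime_iff_not_dvd.mpr hnd)
    have : orderOf h = 1 := Nat.eq_one_of_dvd_coprimes hcop h1 dvd_rfl
    exact orderOf_eq_one_iff.mp this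
  intro g
  set n := orderOf (g : G) with hn
  have hn0 : n ≠ 0 := by
    have : 0 < n := orderOf_pos (g : G)
    omega
  set k := n.factorization p with hkdef
  refine ⟨k, ?_⟩
  have hhH : (g : G) ^ p ^ k ∈ H := H.pow_mem g.2 _
  have hord : orderOf ((g : G) ^ p ^ k) = n / p ^ k := by
    rw [orderOf_pow, ← hn, Nat.gcd_eq_right (Nat.ordProj_dvd n p)]
  have hnd : ¬ p ∣ orderOf ((g : G) ^ p ^ k) := by
    rw [hord]
    exact hp.coprime_iff_not_dvd.mp (Nat.coprime_ordCompl hp hn0)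
  have h1 := key _ hhH hnd
  exact Subtype.ext (by simpa using h1)
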